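/- Linear-estimation attribution under noising-based intervention fails to detect any edge of an OR gate with at least two senders: let n ≥ 2 and let f : (Fin n → ℝ) → ℝ be the multilinear extension of OR, f(x) = 1 − ∏_{j} (1 − x j). Then f is differentiable, and for every i, the directional derivative of f at the all-ones point 𝟙 in the direction Pi.single i 1 equals 0; hence the first-order attribution (x̃_i − x_i)·∂f/∂x_i at the clean point is 0 for every edge i. -/

import Mathlib

/-- The multilinear extension of OR on `n ≥ 2` senders,
`f x = 1 - ∏ j, (1 - x j)`, is differentiable, and its directional derivative at the
all-ones (clean) point in every coordinate direction `Pi.single i 1` is `0`; hence the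
first-order attribution `(x̃ i - x i) * ∂f/∂x_i` at the clean point is `0` for every
edge `i`. -/
theorem stmt_17 (n : ℕ) (hn : 2 ≤ n)
    (f : (Fin n → ℝ) → ℝ) (hf : ∀ x, f x = 1 - ∏ j, (1 - x j)) :
    Differentiable ℝ f ∧
    (∀ i : Fin n, fderiv ℝ f (fun _ => 1) (Pi.single i 1) = 0) ∧
    ∀ (xclean xcorr : Fin n → ℝ) (i : Fin n),
      (xcorr i - xclean i) * fderiv ℝ f (fun _ => 1) (Pi.single i 1) = 0 := by
  have hfe : f = fun x => 1 - ∏ j, (1 - x j) := funext hf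
  subst hfe
  have hg : ∀ (x : Fin n → ℝ) (j : Fin n),
      HasFDerivAt (fun y : Fin n → ℝ => 1 - y j)
        (-(ContinuousLinearMap.proj j : (Fin n → ℝ) →L[ℝ] ℝ)) x := by
    intro x j
    simpa [Pi.sub_def] using (hasFDerivAt_const (1 : ℝ) x).sub (hasFDerivAt_apply (𝕜 := ℝ) j x)
  have hF : ∀ (x : Fin n → ℝ),
      HasFDerivAt (fun y : Fin n → ℝ => 1 - ∏ j, (1 - y j))
        (-(∑ j, (∏ k ∈ Finset.univ.erase j, (1 - x k)) •
          (-(ContinuousLinearMap.proj j : (Fin n → ℝ) →L[ℝ] ℝ)))) x := by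
    intro x
    have hprod : HasFDerivAt (fun y : Fin n → ℝ => ∏ j, (1 - y j))
        (∑ j, (∏ k ∈ Finset.univ.erase j, (1 - x k)) •
          (-(ContinuousLinearMap.proj j : (Fin n → ℝ) →L[ℝ] ℝ))) x :=
      HasFDerivAt.finset_prod (fun j _ => hg x j)
    simpa [Pi.sub_def] using (hasFDerivAt_const (1 : ℝ) x).sub hprod
  have hdiff : Differentiable ℝ (fun y : Fin n → ℝ => 1 - ∏ j, (1 - y j)) :=
    fun x => (hF x).differentiableAt
  have hzero : ∀ i : Fin n,
      fderiv ℝ (fun y : Fin n → ℝ => 1 - ∏ j, (1 - y j)) (fun _ => 1) (Pi.single i 1) = 0 := by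
    intro i
    rw [(hF (fun _ => 1)).fderiv]
    have hz : ∀ j : Fin n, (∏ k ∈ Finset.univ.erase j, (1 - (1:ℝ))) = 0 := by
      intro j
      have hne : (Finset.univ.erase j).Nonempty := by
        rw [← Finset.card_pos, Finset.card_erase_of_mem (Finset.mem_univ j),
          Finset.card_univ, Fintype.card_fin]
        omega
      obtain ⟨m, hm⟩ := hne
      exact Finset.prod_eq_zero hm (by ring)
    have h0 : (0:ℝ)^(n-1) = 0 := zero_pow (by omega)
    simp [hz, h0]
  exact ⟨hdiff, hzero, fun xclean xcorr i => by rw [hzero i, mul_zero]⟩
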